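/- Let q ∈ L¹[0,1] be real-valued and let λ₀ be the first eigenvalue of the Neumann problem -y'' + qy = λy on [0,1], y'(0) = y'(1) = 0. If λ₀ ≥ ∫₀¹ q(x) dx, then q(x) = ∫₀¹ q(s) ds almost everywhere; in particular λ₀ = ∫₀¹ q dx with constant eigenfunction y = 1. -/

import Mathlib

open MeasureTheory intervalIntegral Complex
open scoped ContDiff

/-- The (real-valued) Rayleigh quotient of `y` for the operator `-y'' + q y` on `[0,1]`. -/
noncomputable def rayleighQuotientR (q : ℝ → ℝ) (y : ℝ → ℂ) : ℝ :=
  (∫ x in (0:ℝ)..1,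
      ((-(starRingEnd ℂ) (y x) * deriv (deriv y) x).re + q x * ‖y x‖^2)) /
  (∫ x in (0:ℝ)..1, ‖y x‖^2)

/-- Neumann boundary conditions on `[0,1]`. -/
def NeumannBC (y : ℝ → ℂ) : Prop := deriv y 0 = 0 ∧ deriv y 1 = 0

/-- `y` is a Neumann eigenfunction with eigenvalue `lam`. -/
def IsNeumannEigenfunction (q : ℝ → ℝ) (lam : ℝ) (y : ℝ → ℂ) : Prop :=
  ContDiff ℝ 2 y ∧ (∃ x ∈ Set.Icc (0:ℝ) 1, y x ≠ 0) ∧ NeumannBC y ∧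
  ∀ᵐ x, x ∈ Set.Icc (0:ℝ) 1 → -deriv (deriv y) x + (q x : ℂ) * y x = (lam : ℂ) * y x

/-- `lam` is a Neumann eigenvalue. -/
def IsNeumannEigenvalue (q : ℝ → ℝ) (lam : ℝ) : Prop := ∃ y, IsNeumannEigenfunction q lam y

/-- `lam0` is the smallest Neumann eigenvalue. -/
def IsFirstNeumannEigenvalue (q : ℝ → ℝ) (lam0 : ℝ) : Prop :=
  IsNeumannEigenvalue q lam0 ∧ ∀ lam, IsNeumannEigenvalue q lam → lam0 ≤ lam

lemma amb_key (q : ℝ → ℝ) (hq : IntegrableOn q (Set.Icc (0:ℝ) 1)) (lam0 : ℝ)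
    (hvar : ∀ y : ℝ → ℂ, ContDiff ℝ 2 y → (∃ x ∈ Set.Icc (0:ℝ) 1, y x ≠ 0) →
      NeumannBC y → lam0 ≤ rayleighQuotientR q y)
    (heq : (∫ x in (0:ℝ)..1, q x) = lam0)
    (φ : ℝ → ℝ) (hφ : ContDiff ℝ ∞ φ) (hsupp : HasCompactSupport φ)
    (hts : tsupport φ ⊆ Set.Ioo 0 1) :
    ∫ x in (0:ℝ)..1, (q x - lam0) * φ x = 0 := by
  have hφc : Continuous φ := hφ.continuous
  have hφ1 : ContDiff ℝ ∞ (deriv φ) := by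
    have := hφ.iterate_deriv 1
    simpa using this
  have hφ2 : ContDiff ℝ ∞ (deriv (deriv φ)) := by
    have := hφ.iterate_deriv 2
    simpa [Function.iterate_succ, Function.comp] using this
  have h0ts : (0:ℝ) ∉ tsupport φ := fun h => (by norm_num : ¬ ((0:ℝ) ∈ Set.Ioo (0:ℝ) 1)) (hts h)
  have h1ts : (1:ℝ) ∉ tsupport φ := fun h => (by norm_num : ¬ ((1:ℝ) ∈ Set.Ioo (0:ℝ) 1)) (hts h)
  have hφ0 : φ 0 = 0 := image_eq_zero_of_notMem_tsupport h0ts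
  have hdφ0 : deriv φ 0 = 0 := by
    by_contra h
    exact h0ts (support_deriv_subset (by simpa [Function.mem_support] using h))
  have hdφ1 : deriv φ 1 = 0 := by
    by_contra h
    exact h1ts (support_deriv_subset (by simpa [Function.mem_support] using h))
  -- integrability of q on [0,1]
  have hint_q : IntervalIntegrable q volume 0 1 := by
    rw [intervalIntegrable_iff_integrableOn_Ioc_of_le zero_le_one]
    exact hq.mono_set Set.Ioc_subset_Icc_self
  have hint_ql : IntervalIntegrable (fun x => q x - lam0) volume 0 1 :=
    hint_q.sub intervalIntegrable_const
  -- bound on φ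
  obtain ⟨M0, hM0⟩ := hφc.bounded_above_of_compact_support hsupp
  set M : ℝ := max M0 0 with hM
  have hMnn : 0 ≤ M := le_max_right _ _
  have hMb : ∀ x, |φ x| ≤ M := fun x => le_trans (by simpa using hM0 x) (le_max_left _ _)
  set δ : ℝ := (1/2) / (M + 1) with hδ
  have hδpos : 0 < δ := by positivity
  set A : ℝ := ∫ x in (0:ℝ)..1, (q x - lam0) * φ x with hA
  set C : ℝ := ∫ x in (0:ℝ)..1,
      ((q x - lam0) * (φ x)^2 - φ x * deriv (deriv φ) x) with hC
  -- the key inequality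
  have key_ineq : ∀ t : ℝ, |t| ≤ δ → 0 ≤ 2*A*t + C*t^2 := by
    intro t ht
    have hbound : ∀ x, (1:ℝ)/2 ≤ 1 + t * φ x := by
      intro x
      have h1 : |t * φ x| ≤ δ * M := by
        rw [abs_mul]
        exact mul_le_mul ht (hMb x) (abs_nonneg _) (le_of_lt hδpos)
      have h2 : δ * M ≤ 1/2 := by
        rw [hδ, div_mul_eq_mul_div, div_le_iff₀ (by positivity)]
        nlinarith
      have := neg_le_of_abs_le (h1.trans h2)
      linarith
    set y : ℝ → ℂ := fun x => ((1 + t * φ x : ℝ) : ℂ) with hy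
    have hg2 : ContDiff ℝ 2 (fun x => 1 + t * φ x) :=
      contDiff_const.add (contDiff_const.mul (hφ.of_le (by norm_cast)))
    have hcd : ContDiff ℝ 2 y := Complex.ofRealCLM.contDiff.comp hg2
    have hder : ∀ x, HasDerivAt (fun x : ℝ => 1 + t * φ x) (t * deriv φ x) x := by
      intro x
      have hd : HasDerivAt φ (deriv φ x) x :=
        ((hφ.differentiable (by norm_cast)) x).hasDerivAt
      exact (hd.const_mul t).const_add 1
    have hdy : deriv y = fun x => ((t * deriv φ x : ℝ) : ℂ) :=
      funext fun x => ((hder x).ofReal_comp).deriv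
    have hder2 : ∀ x, HasDerivAt (fun x : ℝ => t * deriv φ x) (t * deriv (deriv φ) x) x := by
      intro x
      exact ((hφ1.differentiable (by norm_cast)) x).hasDerivAt.const_mul t
    have hddy : ∀ x, deriv (deriv y) x = ((t * deriv (deriv φ) x : ℝ) : ℂ) := by
      intro x
      rw [hdy]
      exact ((hder2 x).ofReal_comp).deriv
    have hne : ∃ x ∈ Set.Icc (0:ℝ) 1, y x ≠ 0 := by
      refine ⟨0, by norm_num, ?_⟩
      simp [hy, hφ0]
    have hbc : NeumannBC y := by
      constructor
      · rw [hdy]; simp [hdφ0]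
      · rw [hdy]; simp [hdφ1]
    have hray := hvar y hcd hne hbc
    -- rewrite Rayleigh quotient in real terms
    have hnum_eq : (∫ x in (0:ℝ)..1,
        ((-(starRingEnd ℂ) (y x) * deriv (deriv y) x).re + q x * ‖y x‖^2)) =
        ∫ x in (0:ℝ)..1,
          (-((1 + t * φ x) * (t * deriv (deriv φ) x)) + q x * (1 + t * φ x)^2) := by
      apply intervalIntegral.integral_congr
      intro x _
      dsimp only
      have h1 : -(starRingEnd ℂ) (y x) * deriv (deriv y) x
          = ((-((1 + t * φ x) * (t * deriv (deriv φ) x)) : ℝ) : ℂ) := by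
        rw [hddy x, hy]
        simp [Complex.conj_ofReal]
        push_cast
        ring_nf
      rw [h1, Complex.ofReal_re]
      congr 1
      rw [hy]
      simp only [Complex.norm_real, Real.norm_eq_abs, _root_.sq_abs]
    have hden_eq : (∫ x in (0:ℝ)..1, ‖y x‖^2) =
        ∫ x in (0:ℝ)..1, (1 + t * φ x)^2 := by
      apply intervalIntegral.integral_congr
      intro x _
      dsimp only
      rw [hy]
      simp only [Complex.norm_real, Real.norm_eq_abs, _root_.sq_abs]
    rw [rayleighQuotientR, hnum_eq, hden_eq] at hray
    -- denominator bound
    have hcont1 : Continuous fun x => (1 + t * φ x)^2 := (continuous_const.add (continuous_const.mul hφc)).pow 2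
    have hint_den : IntervalIntegrable (fun x => (1 + t * φ x)^2) volume 0 1 :=
      hcont1.intervalIntegrable 0 1
    have hden_pos : 0 < ∫ x in (0:ℝ)..1, (1 + t * φ x)^2 := by
      have hle : (1:ℝ)/4 ≤ ∫ x in (0:ℝ)..1, (1 + t * φ x)^2 := by
        have h2 : ∫ x in (0:ℝ)..1, (1/4 : ℝ) = 1/4 := by simp
        rw [← h2]
        apply intervalIntegral.integral_mono_on zero_le_one
          intervalIntegrable_const hint_den
        intro x _
        have := hbound x
        nlinarith
      linarith
    have hmul := (le_div_iff₀ hden_pos).mp hray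
    -- numerator integrability
    have hcont2 : Continuous fun x => -((1 + t * φ x) * (t * deriv (deriv φ) x)) := by
      exact (((continuous_const.add (continuous_const.mul hφc)).mul
        (continuous_const.mul hφ2.continuous))).neg
    have hint_num : IntervalIntegrable
        (fun x => -((1 + t * φ x) * (t * deriv (deriv φ) x)) + q x * (1 + t * φ x)^2)
        volume 0 1 := by
      exact (hcont2.intervalIntegrable 0 1).add
        (hint_q.mul_continuousOn hcont1.continuousOn)
    -- decompose Num - lam0 * Den
    have hsplit : (∫ x in (0:ℝ)..1,
          (-((1 + t * φ x) * (t * deriv (deriv φ) x)) + q x * (1 + t * φ x)^2))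
          - lam0 * ∫ x in (0:ℝ)..1, (1 + t * φ x)^2
        = 2*A*t + C*t^2 := by
      have hint3 : IntervalIntegrable (fun x => lam0 * (1 + t * φ x)^2) volume 0 1 :=
        (hcont1.intervalIntegrable 0 1).const_mul lam0
      rw [← intervalIntegral.integral_const_mul, ← intervalIntegral.integral_sub hint_num hint3]
      have hpt : ∀ x,
          (-((1 + t * φ x) * (t * deriv (deriv φ) x)) + q x * (1 + t * φ x)^2)
            - lam0 * (1 + t * φ x)^2
          = (q x - lam0) + t * (-(deriv (deriv φ) x) + 2*((q x - lam0) * φ x))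
            + t^2 * ((q x - lam0) * (φ x)^2 - φ x * deriv (deriv φ) x) := by
        intro x; ring
      rw [intervalIntegral.integral_congr (fun x _ => hpt x)]
      -- integrability pieces
      have hiQ : IntervalIntegrable (fun x => (q x - lam0)) volume 0 1 := hint_ql
      have hiB : IntervalIntegrable
          (fun x => -(deriv (deriv φ) x) + 2*((q x - lam0) * φ x)) volume 0 1 := by
        exact (hφ2.continuous.neg.intervalIntegrable 0 1).add
          (((hint_ql.mul_continuousOn hφc.continuousOn)).const_mul 2)
      have hiC : IntervalIntegrable
          (fun x => (q x - lam0) * (φ x)^2 - φ x * deriv (deriv φ) x) volume 0 1 := by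
        exact (hint_ql.mul_continuousOn (hφc.pow 2).continuousOn).sub
          ((hφc.mul hφ2.continuous).intervalIntegrable 0 1)
      rw [intervalIntegral.integral_add (hiQ.add (hiB.const_mul t)) (hiC.const_mul (t^2)),
          intervalIntegral.integral_add hiQ (hiB.const_mul t),
          intervalIntegral.integral_const_mul, intervalIntegral.integral_const_mul]
      have hP0 : ∫ x in (0:ℝ)..1, (q x - lam0) = 0 := by
        rw [intervalIntegral.integral_sub hint_q intervalIntegrable_const]
        simp [heq]
      have hdd0 : ∫ x in (0:ℝ)..1, deriv (deriv φ) x = 0 := by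
        rw [intervalIntegral.integral_deriv_eq_sub
          (fun x _ => ((hφ1.differentiable (by norm_cast)) x))
          (hφ2.continuous.intervalIntegrable 0 1)]
        rw [hdφ0, hdφ1]; ring
      have hP1 : ∫ x in (0:ℝ)..1,
          (-(deriv (deriv φ) x) + 2*((q x - lam0) * φ x)) = 2*A := by
        rw [intervalIntegral.integral_add (show
            IntervalIntegrable (fun x => -(deriv (deriv φ) x)) volume 0 1 from
            hφ2.continuous.neg.intervalIntegrable 0 1)
          ((hint_ql.mul_continuousOn hφc.continuousOn).const_mul 2),
          intervalIntegral.integral_neg, hdd0, intervalIntegral.integral_const_mul]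
        simp [hA]
      rw [hP0, hP1, ← hC]
      ring
    linarith [hmul, hsplit]
  -- conclude A = 0
  have hA0 : A = 0 := by
    by_contra hA0
    set t0 : ℝ := min δ (|A| / (|C| + 1)) with ht0
    have hApos : 0 < |A| := abs_pos.mpr hA0
    have ht0pos : 0 < t0 := lt_min hδpos (by positivity)
    have ht0δ : t0 ≤ δ := min_le_left _ _
    have ht0A : t0 * (|C| + 1) ≤ |A| := by
      have := min_le_right δ (|A| / (|C| + 1))
      calc t0 * (|C| + 1) ≤ (|A| / (|C| + 1)) * (|C| + 1) := by
            apply mul_le_mul_of_nonneg_right this (by positivity)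
        _ = |A| := by field_simp
    have hCle : C ≤ |C| := le_abs_self C
    have hCge : -|C| ≤ C := neg_abs_le C
    rcases lt_or_gt_of_ne hA0 with hAn | hAp
    · -- A < 0 : take t = t0
      have h := key_ineq t0 (by rw [abs_of_pos ht0pos]; exact ht0δ)
      have hAabs : |A| = -A := abs_of_neg hAn
      nlinarith
    · -- A > 0 : take t = -t0
      have h := key_ineq (-t0) (by rw [abs_neg, abs_of_pos ht0pos]; exact ht0δ)
      have hAabs : |A| = A := abs_of_pos hAp
      nlinarith
  exact hA0

/-- Theorem 5(a): if the first Neumann eigenvalue `λ₀` satisfies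
`λ₀ ≥ ∫₀¹ q`, then `q` is a.e. its mean value; in particular `λ₀ = ∫₀¹ q` with the
constant function `1` as eigenfunction. -/
theorem ambarzumyan_neumann_first (q : ℝ → ℝ)
    (hq : IntegrableOn q (Set.Icc (0:ℝ) 1))
    (lam0 : ℝ) (hfirst : IsFirstNeumannEigenvalue q lam0)
    (hvar : ∀ y : ℝ → ℂ, ContDiff ℝ 2 y → (∃ x ∈ Set.Icc (0:ℝ) 1, y x ≠ 0) →
      NeumannBC y → lam0 ≤ rayleighQuotientR q y)
    (hge : lam0 ≥ ∫ x in (0:ℝ)..1, q x) :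
    (∀ᵐ x, x ∈ Set.Icc (0:ℝ) 1 → q x = ∫ s in (0:ℝ)..1, q s) ∧
    lam0 = (∫ x in (0:ℝ)..1, q x) ∧
    IsNeumannEigenfunction q lam0 (fun _ : ℝ => (1 : ℂ)) := by
  -- derivative facts for the constant function
  have hd1 : deriv (fun _ : ℝ => (1:ℂ)) = fun _ => 0 := funext fun x => deriv_const x 1
  have hd2 : deriv (deriv (fun _ : ℝ => (1:ℂ))) = fun _ => 0 := by
    rw [hd1]; exact funext fun x => deriv_const x 0
  -- Rayleigh quotient of 1
  have hray1 : rayleighQuotientR q (fun _ => (1:ℂ)) = ∫ x in (0:ℝ)..1, q x := by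
    rw [rayleighQuotientR, hd2]
    simp
  have hle : lam0 ≤ ∫ x in (0:ℝ)..1, q x := by
    have := hvar (fun _ => (1:ℂ)) contDiff_const ⟨0, by norm_num, one_ne_zero⟩
      ⟨by rw [hd1], by rw [hd1]⟩
    rwa [hray1] at this
  have heq : (∫ x in (0:ℝ)..1, q x) = lam0 := le_antisymm hge hle
  -- a.e. statement on Ioo via the distribution lemma
  have hloc : LocallyIntegrableOn (fun x => q x - lam0) (Set.Ioo (0:ℝ) 1) volume := by
    have h1 : IntegrableOn (fun x => q x - lam0) (Set.Icc (0:ℝ) 1) volume :=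
      hq.sub (integrableOn_const (by simp))
    exact IntegrableOn.locallyIntegrableOn (IntegrableOn.mono_set h1 Set.Ioo_subset_Icc_self)
  have haeIoo : ∀ᵐ x : ℝ, x ∈ Set.Ioo (0:ℝ) 1 → q x - lam0 = 0 := by
    apply isOpen_Ioo.ae_eq_zero_of_integral_contDiff_smul_eq_zero hloc
    intro g hg hgsupp hgts
    have hkey := amb_key q hq lam0 hvar heq g hg hgsupp hgts
    have hvanish : ∀ x ∉ Set.Ioc (0:ℝ) 1, g x • (q x - lam0) = 0 := by
      intro x hx
      have : x ∉ tsupport g := fun h => hx (Set.Ioo_subset_Ioc_self (hgts h))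
      simp [image_eq_zero_of_notMem_tsupport this]
    have hcomm : (∫ x in (0:ℝ)..1, g x • (q x - lam0)) = ∫ x in (0:ℝ)..1, (q x - lam0) * g x :=
      intervalIntegral.integral_congr fun x _ => by rw [smul_eq_mul, mul_comm]
    rw [← setIntegral_eq_integral_of_forall_compl_eq_zero hvanish,
        ← intervalIntegral.integral_of_le zero_le_one, hcomm, hkey]
  have hnull : ∀ᵐ x : ℝ, x ∉ ({0, 1} : Set ℝ) := by
    apply measure_eq_zero_iff_ae_notMem.mp
    exact measure_union_null (measure_singleton 0) (measure_singleton 1)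
  have haeIcc : ∀ᵐ x : ℝ, x ∈ Set.Icc (0:ℝ) 1 → q x = ∫ s in (0:ℝ)..1, q s := by
    filter_upwards [haeIoo, hnull] with x h1 h2 hx
    have hx0 : x ≠ 0 := fun h => h2 (by simp [h])
    have hx1 : x ≠ 1 := fun h => h2 (by simp [h])
    have : x ∈ Set.Ioo (0:ℝ) 1 := ⟨hx.1.lt_of_ne' hx0, hx.2.lt_of_ne hx1⟩
    have := h1 this
    rw [heq]
    linarith
  refine ⟨haeIcc, heq.symm, contDiff_const, ⟨0, by norm_num, one_ne_zero⟩,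
    ⟨by rw [hd1], by rw [hd1]⟩, ?_⟩
  filter_upwards [haeIcc] with x h1 hx
  rw [hd2]
  have : q x = lam0 := by rw [h1 hx, heq]
  rw [this]
  simp
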